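/- Let D be a squarefree positive integer with an even number of distinct prime factors and let N be a positive integer with gcd(D, N) = 1. Then there exists a fundamental discriminant d with −16DN < d < 0 which satisfies the (D, N) Heegner hypothesis. -/

import Mathlib

/-- Squarefree is preserved by negation. -/
lemma squarefree_neg_int {x : ℤ} (h : Squarefree x) : Squarefree (-x) :=
  fun y hy => h y (by rwa [dvd_neg] at hy)

/-- CRT: given pairwise-distinct odd primes and target residues, find an integer with
prescribed residue mod 8 and prescribed residues mod each prime. -/
lemma exists_crt_odd_primes (r : ℤ) (f : (p : ℕ) → ZMod p) :
    ∀ (s : Finset ℕ), (∀ p ∈ s, p.Prime ∧ p ≠ 2) →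
      ∃ c : ℤ, c % 8 = r % 8 ∧ ∀ p ∈ s, (c : ZMod p) = f p := by
  classical
  intro s
  induction s using Finset.induction_on with
  | empty => exact fun _ => ⟨r, rfl, by simp⟩
  | @insert q s' hq ih =>
      intro hall
      obtain ⟨hqP, hq2⟩ := hall q (Finset.mem_insert_self q s')
      obtain ⟨c, hc8, hcp⟩ := ih (fun p hp => hall p (Finset.mem_insert_of_mem hp))
      haveI : Fact q.Prime := ⟨hqP⟩
      haveI : NeZero q := ⟨hqP.pos.ne'⟩
      set Q : ℕ := ∏ p ∈ s', p with hQ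
      have hQ0 : ((8 * Q : ℕ) : ZMod q) ≠ 0 := by
        rw [Ne, ZMod.natCast_eq_zero_iff]
        intro hdvd
        rcases (Nat.Prime.dvd_mul hqP).mp hdvd with h8 | hprod
        · have : q ∣ 2 := hqP.dvd_of_dvd_pow (show q ∣ 2 ^ 3 by norm_num at h8 ⊢; exact h8)
          exact hq2 ((Nat.prime_dvd_prime_iff_eq hqP Nat.prime_two).mp this)
        · obtain ⟨p, hps', hqp⟩ := (hqP.prime.dvd_finset_prod_iff _).mp hprod
          have := (Nat.prime_dvd_prime_iff_eq hqP (hall p (Finset.mem_insert_of_mem hps')).1).mp hqp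
          exact hq (this ▸ hps')
      set τ : ZMod q := (f q - (c : ZMod q)) * ((8 * Q : ℕ) : ZMod q)⁻¹ with hτ
      refine ⟨c + 8 * ((Q : ℤ) * (τ.val : ℤ)), ?_, ?_⟩
      · rw [Int.add_mul_emod_self_left]; exact hc8
      · intro p hp
        rcases Finset.mem_insert.mp hp with rfl | hps'
        · push_cast
          rw [ZMod.natCast_rightInverse τ]
          rw [hτ]
          have h8Q : ((8 * Q : ℕ) : ZMod p) = 8 * (Q : ZMod p) := by push_cast; ring
          rw [h8Q] at hQ0
          have hQne : (Q : ZMod p) ≠ 0 := right_ne_zero_of_mul hQ0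
          have h8ne : (8 : ZMod p) ≠ 0 := left_ne_zero_of_mul hQ0
          field_simp
          push_cast
          ring
        · haveI : Fact p.Prime := ⟨(hall p (Finset.mem_insert_of_mem hps')).1⟩
          have hpQ : (Q : ZMod p) = 0 := by
            rw [ZMod.natCast_eq_zero_iff]
            exact Finset.dvd_prod_of_mem _ hps'
          push_cast
          rw [hpQ]
          rw [show (c:ZMod p) + 8 * (0 * (τ.val : ZMod p)) = (c : ZMod p) by ring]
          exact hcp p hps'



/-- An integer `d` satisfies the `(D, N)` Heegner hypothesis if `(d|p) = -1` for every
odd prime `p ∣ D` (with `d ≡ 5 (mod 8)` if `2 ∣ D`), and `(d|p) = 1` for every odd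
prime `p ∣ N` (with `d ≡ 1 (mod 8)` if `2 ∣ N`). -/
def SatisfiesHeegnerHypothesis (D N : ℕ) (d : ℤ) : Prop :=
  (∀ p : ℕ, (hp : p.Prime) → Odd p → p ∣ D → @legendreSym p ⟨hp⟩ d = -1) ∧
  (2 ∣ D → d % 8 = 5) ∧
  (∀ p : ℕ, (hp : p.Prime) → Odd p → p ∣ N → @legendreSym p ⟨hp⟩ d = 1) ∧
  (2 ∣ N → d % 8 = 1)

/-- An integer `d` is a fundamental discriminant if either `d ≡ 1 (mod 4)` and `d` is
squarefree, or `d = 4m` with `m` squarefree and `m ≡ 2` or `3 (mod 4)`. -/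
def IsFundamentalDiscriminant (d : ℤ) : Prop :=
  (d % 4 = 1 ∧ Squarefree d) ∨
  (∃ m : ℤ, d = 4 * m ∧ Squarefree m ∧ (m % 4 = 2 ∨ m % 4 = 3))

/-- For `D` a squarefree positive integer with an even number of distinct
prime factors and `N` a positive integer coprime to `D`, there is a fundamental
discriminant `d` with `-16DN < d < 0` satisfying the `(D, N)` Heegner hypothesis. -/
theorem exists_fundamental_heegner_discriminant (D N : ℕ) (hDpos : 0 < D)
    (hDsf : Squarefree D) (hDeven : Even D.primeFactors.card) (hNpos : 0 < N)
    (hgcd : Nat.gcd D N = 1) :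
    ∃ d : ℤ, IsFundamentalDiscriminant d ∧ -16 * D * N < d ∧ d < 0 ∧
      SatisfiesHeegnerHypothesis D N d := by
  classical
  have hDN0 : D * N ≠ 0 := Nat.mul_ne_zero hDpos.ne' hNpos.ne'
  have hND : ∀ p : ℕ, p.Prime → p ∣ N → ¬ p ∣ D := by
    intro p hp hpN hpD
    have h := Nat.dvd_gcd hpD hpN
    rw [hgcd] at h
    exact hp.ne_one (Nat.dvd_one.mp h)
  have h2DN : ¬(2 ∣ D ∧ 2 ∣ N) := fun ⟨h1, h2⟩ => hND 2 Nat.prime_two h2 h1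
  -- nonsquare choice
  have hex : ∀ p : ℕ, p.Prime → p ≠ 2 → ∃ u : ZMod p, ¬ IsSquare u := by
    intro p hp hp2
    haveI : Fact p.Prime := ⟨hp⟩
    exact FiniteField.exists_nonsquare (by rw [ZMod.ringChar_zmod_n]; exact hp2)
  set w : (p : ℕ) → ZMod p := fun p =>
    if h : p.Prime ∧ p ≠ 2 ∧ p ∣ D then (hex p h.1 h.2.1).choose else 1 with hwdef
  have hw_ns : ∀ p (h : p.Prime ∧ p ≠ 2 ∧ p ∣ D), ¬ IsSquare (w p) := by
    intro p h
    simp only [hwdef, dif_pos h]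
    exact (hex p h.1 h.2.1).choose_spec
  have hw_one : ∀ p : ℕ, ¬ p ∣ D → w p = 1 := by
    intro p hpd
    simp only [hwdef]
    rw [dif_neg (by tauto)]
  have hw_ne : ∀ p : ℕ, p.Prime → p ≠ 2 → w p ≠ 0 := by
    intro p hp hp2
    haveI : Fact p.Prime := ⟨hp⟩
    by_cases h : p.Prime ∧ p ≠ 2 ∧ p ∣ D
    · intro h0
      exact hw_ns p h (h0 ▸ ⟨0, by simp⟩)
    · simp only [hwdef]
      rw [dif_neg h]
      exact one_ne_zero
  -- the finset of odd primes dividing D*N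
  set S : Finset ℕ := (D * N).primeFactors.erase 2 with hS
  have hSmem : ∀ p ∈ S, p.Prime ∧ p ≠ 2 := by
    intro p hp
    exact ⟨Nat.prime_of_mem_primeFactors (Finset.mem_of_mem_erase hp),
      (Finset.mem_erase.mp hp).1⟩
  -- target residue mod 8
  set rn : ℕ := if 2 ∣ N then 7 else 3 with hrndef
  have hrn : rn = 3 ∨ rn = 7 := by
    by_cases h : 2 ∣ N <;> simp [hrndef, h]
  have hrnN : 2 ∣ N → rn = 7 := fun h => by simp [hrndef, h]
  have hrnD : ¬ 2 ∣ N → rn = 3 := fun h => by simp [hrndef, h]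
  obtain ⟨c, hc8, hcp⟩ := exists_crt_odd_primes (rn : ℤ) (fun p => -(w p)) S hSmem
  have hc8' : c % 8 = (rn : ℤ) := by
    rcases hrn with h | h <;> rw [h] at hc8 ⊢ <;> simpa using hc8
  -- the representative
  set Q : ℕ := ∏ p ∈ S, p with hQdef
  have hQpos : 0 < Q := Finset.prod_pos (fun p hp => (hSmem p hp).1.pos)
  have hQdvd : Q ∣ D * N :=
    dvd_trans (Finset.prod_dvd_prod_of_subset _ _ _ (Finset.erase_subset _ _))
      (Nat.prod_primeFactors_dvd _)
  set K : ℤ := 8 * (Q : ℤ) with hKdef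
  have hKpos : 0 < K := by positivity
  set m : ℤ := c % K with hmdef
  have hm0 : 0 ≤ m := Int.emod_nonneg c hKpos.ne'
  have hmK : m < K := Int.emod_lt_of_pos c hKpos
  have hm8 : m % 8 = (rn : ℤ) := by
    rw [hmdef, hKdef, Int.emod_emod_of_dvd c ⟨(Q : ℤ), rfl⟩]
    exact hc8'
  have hmp : ∀ p ∈ S, (m : ZMod p) = -(w p) := by
    intro p hp
    haveI : Fact p.Prime := ⟨(hSmem p hp).1⟩
    have hQp : ((Q : ℕ) : ZMod p) = 0 :=
      (ZMod.natCast_eq_zero_iff _ _).mpr (Finset.dvd_prod_of_mem _ hp)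
    rw [hmdef, Int.emod_def, hKdef]
    push_cast
    rw [hQp, hcp p hp]
    ring
  set n : ℕ := m.toNat with hndef
  have hnm : (n : ℤ) = m := Int.toNat_of_nonneg hm0
  have hn8 : n % 8 = rn := by omega
  have hn_pos : 0 < n := by rcases hrn with h | h <;> omega
  obtain ⟨a, b, hab, hsf⟩ := Nat.sq_mul_squarefree n
  have hbodd : b % 2 = 1 := by
    rcases Nat.even_or_odd b with ⟨k, hk⟩ | ho
    · exfalso
      have h2n : 2 ∣ n := ⟨2 * k ^ 2 * a, by rw [← hab, hk]; ring⟩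
      rcases hrn with h | h <;> omega
    · exact Nat.odd_iff.mp ho
  have ha8 : a % 8 = rn := by
    obtain ⟨k, hk⟩ := Nat.odd_iff.mpr hbodd
    obtain ⟨j, hj⟩ := Nat.even_mul_succ_self k
    have hb2 : b ^ 2 = 8 * j + 1 := by
      have h1 : b ^ 2 = 4 * (k * (k + 1)) + 1 := by rw [hk]; ring
      omega
    have hna : n = a + 8 * (j * a) := by rw [← hab, hb2]; ring
    rw [hna, Nat.add_mul_mod_self_left] at hn8
    exact hn8
  have ha4 : a % 4 = 3 := by rcases hrn with h | h <;> omega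
  have hapos : 0 < a := by rcases hrn with h | h <;> omega
  have han : a ≤ n := Nat.le_of_dvd hn_pos ⟨b ^ 2, by rw [← hab]; ring⟩
  -- key legendre computation
  have key : ∀ p : ℕ, (hp : p.Prime) → p ≠ 2 → p ∣ D * N →
      (p ∣ D → @legendreSym p ⟨hp⟩ (-(a : ℤ)) = -1) ∧
      (¬ p ∣ D → @legendreSym p ⟨hp⟩ (-(a : ℤ)) = 1) := by
    intro p hp hp2 hpdvd
    haveI : Fact p.Prime := ⟨hp⟩
    have hpS : p ∈ S := Finset.mem_erase.mpr ⟨hp2, Nat.mem_primeFactors.mpr ⟨hp, hpdvd, hDN0⟩⟩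
    have hwp : w p ≠ 0 := hw_ne p hp hp2
    have h1 : ((b : ZMod p)) ^ 2 * (a : ZMod p) = -(w p) := by
      have h0 : ((n : ℕ) : ZMod p) = -(w p) := by
        rw [← Int.cast_natCast, hnm]
        exact hmp p hpS
      rw [← hab] at h0
      push_cast at h0
      exact h0
    have hB : (b : ZMod p) ≠ 0 := by
      intro h0
      apply hwp
      rw [h0] at h1
      simpa using h1.symm
    have hd : ((-(a : ℤ) : ℤ) : ZMod p) = w p * (((b : ZMod p)) ^ 2)⁻¹ := by
      push_cast
      field_simp
      linear_combination -h1
    have hchi : @legendreSym p ⟨hp⟩ (-(a : ℤ)) = quadraticChar (ZMod p) (w p) := by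
      show quadraticChar (ZMod p) ((-(a : ℤ) : ℤ) : ZMod p) = quadraticChar (ZMod p) (w p)
      rw [hd, map_mul]
      have hsq : quadraticChar (ZMod p) (((b : ZMod p)) ^ 2) = 1 := quadraticChar_sq_one' hB
      have hinv : quadraticChar (ZMod p) (((b : ZMod p)) ^ 2) *
          quadraticChar (ZMod p) ((((b : ZMod p)) ^ 2)⁻¹) = 1 := by
        rw [← map_mul, mul_inv_cancel₀ (pow_ne_zero 2 hB), map_one]
      rw [hsq, one_mul] at hinv
      rw [hinv, mul_one]
    constructor
    · intro hpD
      rw [hchi]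
      exact quadraticChar_neg_one_iff_not_isSquare.mpr (hw_ns p ⟨hp, hp2, hpD⟩)
    · intro hpD
      rw [hchi, hw_one p hpD]
      exact map_one _
  -- assemble
  have hancast : (a : ℤ) ≤ (n : ℤ) := by exact_mod_cast han
  have hQDN : (Q : ℤ) ≤ (D : ℤ) * (N : ℤ) := by
    have := Nat.le_of_dvd (Nat.pos_of_ne_zero hDN0) hQdvd
    exact_mod_cast this
  have hT1 : (1 : ℤ) ≤ (D : ℤ) * (N : ℤ) := by
    have : 1 ≤ D * N := Nat.one_le_iff_ne_zero.mpr hDN0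
    exact_mod_cast this
  refine ⟨-(a : ℤ), Or.inl ⟨by omega, squarefree_neg_int (Int.squarefree_natCast.mpr hsf)⟩,
    ?_, by omega, ?_, ?_, ?_, ?_⟩
  · have heq : -16 * (D : ℤ) * (N : ℤ) = -(16 * ((D : ℤ) * (N : ℤ))) := by ring
    rw [heq]
    have hKQ : K = 8 * (Q : ℤ) := hKdef
    linarith [hancast, hnm, hmK, hQDN, hT1, hKQ]
  · -- p | D, odd
    intro p hp hodd hpD
    have hp2 : p ≠ 2 := by rintro rfl; simp [Nat.odd_iff] at hodd
    exact (key p hp hp2 (Dvd.dvd.mul_right hpD N)).1 hpD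
  · -- 2 | D
    intro h2D
    have h3 : rn = 3 := hrnD (fun h2N => h2DN ⟨h2D, h2N⟩)
    omega
  · -- p | N, odd
    intro p hp hodd hpN
    have hp2 : p ≠ 2 := by rintro rfl; simp [Nat.odd_iff] at hodd
    exact (key p hp hp2 (Dvd.dvd.mul_left hpN D)).2 (hND p hp hpN)
  · -- 2 | N
    intro h2N
    have h7 : rn = 7 := hrnN h2N
    omega
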